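/- (Kelly ruin threshold) For 1/2 < p < 1 there exists a unique γ₀ ∈ (2p-1, 1) with p·log(1+γ₀) + (1-p)·log(1-γ₀) = 0; moreover g(γ) < 0 for all γ ∈ (γ₀, 1) and g(γ) > 0 for all γ ∈ (0, γ₀). -/

import Mathlib

theorem kelly_ruin_threshold (p : ℝ) (hp : 1 / 2 < p) (hp1 : p < 1) (q : ℝ) (hq : q = 1 - p) :
    let g : ℝ → ℝ := fun γ => p * Real.log (1 + γ) + q * Real.log (1 - γ)
    ∃ γ₀ ∈ Set.Ioo (2 * p - 1) 1, g γ₀ = 0 ∧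
      (∀ γ' ∈ Set.Ioo (2 * p - 1) 1, g γ' = 0 → γ' = γ₀) ∧
      (∀ γ ∈ Set.Ioo γ₀ 1, g γ < 0) ∧
      (∀ γ ∈ Set.Ioo 0 γ₀, 0 < g γ) := by
  intro g
  have hq0 : 0 < q := by rw [hq]; linarith
  set k := 2 * p - 1 with hk
  have hk0 : 0 < k := by rw [hk]; linarith
  have hk1 : k < 1 := by rw [hk]; linarith
  have hder : ∀ x ∈ Set.Ioo (-1:ℝ) 1, HasDerivAt g ((k - x)/((1+x)*(1-x))) x := by
    intro x hx
    obtain ⟨hx1, hx2⟩ := hx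
    have h1 : (1:ℝ) + x ≠ 0 := by linarith
    have h2 : (1:ℝ) - x ≠ 0 := by linarith
    have d1 : HasDerivAt (fun γ : ℝ => 1 + γ) 1 x := by
      simpa using (hasDerivAt_id x).const_add (1:ℝ)
    have d2 : HasDerivAt (fun γ : ℝ => 1 - γ) (-1) x := by
      simpa using (hasDerivAt_id x).const_sub (1:ℝ)
    have l1 : HasDerivAt (fun γ : ℝ => Real.log (1 + γ)) (1/(1+x)) x := by
      simpa [Function.comp_def] using (Real.hasDerivAt_log h1).comp x d1
    have l2 : HasDerivAt (fun γ : ℝ => Real.log (1 - γ)) (-(1/(1-x))) x := by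
      simpa [Function.comp_def] using (Real.hasDerivAt_log h2).comp x d2
    have h := (l1.const_mul p).add (l2.const_mul q)
    refine h.congr_deriv ?_
    rw [hk, hq]
    field_simp
    ring
  have hcont : ∀ x ∈ Set.Ioo (-1:ℝ) 1, ContinuousAt g x :=
    fun x hx => (hder x hx).continuousAt
  have hanti : StrictAntiOn g (Set.Ico k 1) := by
    apply strictAntiOn_of_deriv_neg (convex_Ico k 1)
    · intro x hx
      exact (hcont x ⟨by linarith [hx.1], hx.2⟩).continuousWithinAt
    · intro x hx
      rw [interior_Ico] at hx
      rw [(hder x ⟨by linarith [hx.1], hx.2⟩).deriv]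
      exact div_neg_of_neg_of_pos (by linarith [hx.1])
        (mul_pos (by linarith [hx.1]) (by linarith [hx.2]))
  have hmono : StrictMonoOn g (Set.Icc 0 k) := by
    apply strictMonoOn_of_deriv_pos (convex_Icc 0 k)
    · intro x hx
      exact (hcont x ⟨by linarith [hx.1], by linarith [hx.2]⟩).continuousWithinAt
    · intro x hx
      rw [interior_Icc] at hx
      rw [(hder x ⟨by linarith [hx.1], by linarith [hx.2]⟩).deriv]
      exact div_pos (by linarith [hx.2])
        (mul_pos (by linarith [hx.1]) (by linarith [hx.2]))
  have hg0 : g 0 = 0 := by simp [g]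
  have hgk : 0 < g k := by
    have := hmono ⟨le_refl (0:ℝ), hk0.le⟩ ⟨hk0.le, le_refl k⟩ hk0
    rwa [hg0] at this
  set γ₁ := max ((k+1)/2) (1 - Real.exp (-1/q)/2) with hγ₁def
  have hγ₁k : k < γ₁ := lt_of_lt_of_le (by linarith) (le_max_left _ _)
  have hγ₁1 : γ₁ < 1 := by
    apply max_lt (by linarith)
    have := Real.exp_pos (-1/q)
    linarith
  have hγ₁0 : 0 < γ₁ := lt_trans hk0 hγ₁k
  have hgγ₁ : g γ₁ < 0 := by
    have h1 : Real.log (1 + γ₁) < 1 := by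
      rw [Real.log_lt_iff_lt_exp (by linarith)]
      have := Real.exp_one_gt_d9
      linarith
    have h2 : Real.log (1 - γ₁) < -1/q := by
      rw [Real.log_lt_iff_lt_exp (by linarith)]
      have hle : γ₁ ≥ 1 - Real.exp (-1/q)/2 := le_max_right _ _
      have := Real.exp_pos (-1/q)
      linarith
    have e1 : p * Real.log (1 + γ₁) < p := by nlinarith
    have e2 : q * Real.log (1 - γ₁) < -1 := by
      have h3 := mul_lt_mul_of_pos_left h2 hq0
      have h4 : q * (-1/q) = -1 := by field_simp
      linarith
    show p * Real.log (1 + γ₁) + q * Real.log (1 - γ₁) < 0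
    linarith
  have hcIcc : ContinuousOn g (Set.Icc k γ₁) := fun x hx =>
    (hcont x ⟨by linarith [hx.1], by linarith [hx.2]⟩).continuousWithinAt
  have hmem0 : (0:ℝ) ∈ Set.Ioo (g γ₁) (g k) := ⟨hgγ₁, hgk⟩
  obtain ⟨γ₀, hmem, heq⟩ := intermediate_value_Ioo' hγ₁k.le hcIcc hmem0
  have hγ₀1 : γ₀ < 1 := lt_trans hmem.2 hγ₁1
  refine ⟨γ₀, ⟨hmem.1, hγ₀1⟩, heq, ?_, ?_, ?_⟩
  · intro γ' hγ' h0
    exact hanti.injOn ⟨hγ'.1.le, hγ'.2⟩ ⟨hmem.1.le, hγ₀1⟩ (by rw [h0, heq])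
  · intro γ hγ
    have := hanti ⟨hmem.1.le, hγ₀1⟩ ⟨(lt_trans hmem.1 hγ.1).le, hγ.2⟩ hγ.1
    rwa [heq] at this
  · intro γ hγ
    by_cases h : γ ≤ k
    · have := hmono ⟨le_refl (0:ℝ), hk0.le⟩ ⟨hγ.1.le, h⟩ hγ.1
      rwa [hg0] at this
    · push_neg at h
      have := hanti ⟨h.le, by linarith [hγ.2]⟩ ⟨hmem.1.le, hγ₀1⟩ hγ.2
      rwa [heq] at this
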